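/- Relative smoothness of the phase retrieval objective: let f(x) = (1/4m) Σ_{r=1}^m (|⟨a_r, x⟩|² - y_r)² with y_r ≥ 0, and ψ(x) = ‖x‖⁴/4 + ‖x‖²/2. Then for any L ≥ (3/m) Σ_{r=1}^m ‖a_r‖⁴, the function Lψ - f is convex on ℝⁿ; equivalently D_f(x,u) ≤ L D_ψ(x,u) for all x, u. -/

import Mathlib

open scoped RealInnerProductSpace
open Finset

noncomputable def bregman {n : ℕ} (φ : EuclideanSpace ℝ (Fin n) → ℝ)
    (x u : EuclideanSpace ℝ (Fin n)) : ℝ :=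
  φ x - φ u - ⟪gradient φ u, x - u⟫

lemma quartic_hasDerivAt (k0 k1 k2 k3 k4 t : ℝ) :
    HasDerivAt (fun t : ℝ => k0 + k1*t + k2*t^2 + k3*t^3 + k4*t^4)
      (k1 + 2*k2*t + 3*k3*t^2 + 4*k4*t^3) t := by
  have h := ((((hasDerivAt_id t).const_mul k1).const_add k0).add
      ((hasDerivAt_pow 2 t).const_mul k2)).add
      (((hasDerivAt_pow 3 t).const_mul k3).add ((hasDerivAt_pow 4 t).const_mul k4))
  convert h using 1
  · rfl
  · rfl
  · funext s; simp only [id_eq, Pi.add_apply]; ring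
  · push_cast; ring

lemma convexOn_quartic (k0 k1 k2 k3 k4 : ℝ)
    (h : ∀ t : ℝ, 0 ≤ 2*k2 + 6*k3*t + 12*k4*t^2) :
    ConvexOn ℝ Set.univ (fun t : ℝ => k0 + k1*t + k2*t^2 + k3*t^3 + k4*t^4) := by
  have hd1 : ∀ t : ℝ, HasDerivAt (fun t : ℝ => k0 + k1*t + k2*t^2 + k3*t^3 + k4*t^4)
      (k1 + 2*k2*t + 3*k3*t^2 + 4*k4*t^3) t := quartic_hasDerivAt k0 k1 k2 k3 k4
  have hd2 : ∀ t : ℝ, HasDerivAt (fun t : ℝ => k1 + 2*k2*t + 3*k3*t^2 + 4*k4*t^3)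
      (2*k2 + 6*k3*t + 12*k4*t^2) t := by
    intro t
    have h := quartic_hasDerivAt k1 (2*k2) (3*k3) (4*k4) 0 t
    convert h using 1
    · funext s; ring
    · ring
  have e1 : deriv (fun t : ℝ => k0 + k1*t + k2*t^2 + k3*t^3 + k4*t^4)
      = fun t => k1 + 2*k2*t + 3*k3*t^2 + 4*k4*t^3 := funext fun t => (hd1 t).deriv
  apply convexOn_of_deriv2_nonneg convex_univ
  · exact Continuous.continuousOn (by continuity)
  · exact fun t _ => ((hd1 t).differentiableAt).differentiableWithinAt
  · rw [e1]; exact fun t _ => ((hd2 t).differentiableAt).differentiableWithinAt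
  · intro t _
    have : deriv^[2] (fun t : ℝ => k0 + k1*t + k2*t^2 + k3*t^3 + k4*t^4) t
        = 2*k2 + 6*k3*t + 12*k4*t^2 := by
      show deriv (deriv _) t = _
      rw [e1]; exact (hd2 t).deriv
    rw [this]; exact h t

lemma line_convex {n m : ℕ} (hm : 0 < m) (a : Fin m → EuclideanSpace ℝ (Fin n))
    (y : Fin m → ℝ) (hy : ∀ r, 0 ≤ y r) (L : ℝ)
    (hL : (3 / (m : ℝ)) * ∑ r, ‖a r‖ ^ 4 ≤ L)
    (x v : EuclideanSpace ℝ (Fin n)) :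
    ConvexOn ℝ Set.univ (fun t : ℝ =>
      L * (‖x + t • v‖ ^ 4 / 4 + ‖x + t • v‖ ^ 2 / 2)
        - (1 / (4 * (m : ℝ))) * ∑ r, (⟪a r, x + t • v⟫ ^ 2 - y r) ^ 2) := by
  have hm' : (m : ℝ) ≠ 0 := Nat.cast_ne_zero.mpr hm.ne'
  have hL0 : 0 ≤ L := le_trans (by positivity) hL
  have hnorm : ∀ t : ℝ, ‖x + t • v‖ ^ 2 = ‖x‖^2 + 2*⟪x,v⟫*t + ‖v‖^2*t^2 := by
    intro t
    rw [norm_add_sq_real, real_inner_smul_right, norm_smul, mul_pow, Real.norm_eq_abs, sq_abs]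
    ring
  have hinner : ∀ (t : ℝ) (r : Fin m), ⟪a r, x + t • v⟫ = ⟪a r, x⟫ + ⟪a r, v⟫ * t := by
    intro t r
    rw [inner_add_right, real_inner_smul_right]
    ring
  have hfun : (fun t : ℝ =>
      L * (‖x + t • v‖ ^ 4 / 4 + ‖x + t • v‖ ^ 2 / 2)
        - (1 / (4 * (m : ℝ))) * ∑ r, (⟪a r, x + t • v⟫ ^ 2 - y r) ^ 2)
      = fun t : ℝ =>
        (L * ((‖x‖^2)^2/4 + ‖x‖^2/2) - (1 / (4 * (m : ℝ))) * ∑ r, (⟪a r, x⟫^2 - y r)^2)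
        + (L * (‖x‖^2*⟪x,v⟫ + ⟪x,v⟫)
            - (1 / (4 * (m : ℝ))) * ∑ r, 4*⟪a r, x⟫*⟪a r, v⟫*(⟪a r, x⟫^2 - y r)) * t
        + (L * (⟪x,v⟫^2 + ‖x‖^2*‖v‖^2/2 + ‖v‖^2/2)
            - (1 / (4 * (m : ℝ))) * ∑ r, (2*(⟪a r, x⟫^2 - y r)*⟪a r, v⟫^2
                + 4*⟪a r, x⟫^2*⟪a r, v⟫^2)) * t^2
        + (L * (⟪x,v⟫*‖v‖^2)
            - (1 / (4 * (m : ℝ))) * ∑ r, 4*⟪a r, x⟫*⟪a r, v⟫^3) * t^3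
        + (L * ((‖v‖^2)^2/4) - (1 / (4 * (m : ℝ))) * ∑ r, ⟪a r, v⟫^4) * t^4 := by
    funext t
    have h4 : ‖x + t • v‖ ^ 4 = (‖x + t • v‖ ^ 2)^2 := by ring
    rw [h4, hnorm t]
    have hsum : ∑ r, (⟪a r, x + t • v⟫ ^ 2 - y r) ^ 2
        = (∑ r, (⟪a r, x⟫^2 - y r)^2)
          + (∑ r, 4*⟪a r, x⟫*⟪a r, v⟫*(⟪a r, x⟫^2 - y r)) * t
          + (∑ r, (2*(⟪a r, x⟫^2 - y r)*⟪a r, v⟫^2 + 4*⟪a r, x⟫^2*⟪a r, v⟫^2)) * t^2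
          + (∑ r, 4*⟪a r, x⟫*⟪a r, v⟫^3) * t^3
          + (∑ r, ⟪a r, v⟫^4) * t^4 := by
      rw [Finset.sum_mul, Finset.sum_mul, Finset.sum_mul, Finset.sum_mul,
        ← Finset.sum_add_distrib, ← Finset.sum_add_distrib, ← Finset.sum_add_distrib,
        ← Finset.sum_add_distrib]
      refine Finset.sum_congr rfl fun r _ => ?_
      rw [hinner t r]; ring
    rw [hsum]; ring
  rw [hfun]
  apply convexOn_quartic
  intro t
  have hQ0 : (0:ℝ) ≤ ‖x‖^2 + 2*⟪x,v⟫*t + ‖v‖^2*t^2 := by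
    rw [← hnorm t]; positivity
  have key : ∀ r : Fin m, ⟪a r, v⟫^2 * (3*(⟪a r, x⟫ + ⟪a r, v⟫*t)^2 - y r)
      ≤ ‖a r‖^4 * (3 * (‖v‖^2 * (‖x‖^2 + 2*⟪x,v⟫*t + ‖v‖^2*t^2))) := by
    intro r
    have h1 : ⟪a r, v⟫^2 ≤ ‖a r‖^2 * ‖v‖^2 := by
      have h := real_inner_mul_inner_self_le (a r) v
      rw [real_inner_self_eq_norm_sq, real_inner_self_eq_norm_sq] at h
      nlinarith [h]
    have h2 : (⟪a r, x⟫ + ⟪a r, v⟫*t)^2 ≤ ‖a r‖^2 * (‖x‖^2 + 2*⟪x,v⟫*t + ‖v‖^2*t^2) := by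
      rw [← hinner t r, ← hnorm t]
      have h := real_inner_mul_inner_self_le (a r) (x + t • v)
      rw [real_inner_self_eq_norm_sq, real_inner_self_eq_norm_sq] at h
      nlinarith [h]
    have h3 := mul_le_mul h1 h2 (sq_nonneg _) (by positivity)
    nlinarith [h3, mul_nonneg (sq_nonneg ⟪a r, v⟫) (hy r)]
  have hsumle : (1/(m:ℝ)) * ∑ r, ⟪a r, v⟫^2 * (3*(⟪a r, x⟫ + ⟪a r, v⟫*t)^2 - y r)
      ≤ L * (‖v‖^2 * (‖x‖^2 + 2*⟪x,v⟫*t + ‖v‖^2*t^2)) := by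
    have h1 : ∑ r, ⟪a r, v⟫^2 * (3*(⟪a r, x⟫ + ⟪a r, v⟫*t)^2 - y r)
        ≤ ∑ r, ‖a r‖^4 * (3 * (‖v‖^2 * (‖x‖^2 + 2*⟪x,v⟫*t + ‖v‖^2*t^2))) :=
      Finset.sum_le_sum fun r _ => key r
    have h2 : ∑ r, ‖a r‖^4 * (3 * (‖v‖^2 * (‖x‖^2 + 2*⟪x,v⟫*t + ‖v‖^2*t^2)))
        = (∑ r, ‖a r‖^4) * (3 * (‖v‖^2 * (‖x‖^2 + 2*⟪x,v⟫*t + ‖v‖^2*t^2))) := by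
      rw [← Finset.sum_mul]
    calc (1/(m:ℝ)) * ∑ r, ⟪a r, v⟫^2 * (3*(⟪a r, x⟫ + ⟪a r, v⟫*t)^2 - y r)
        ≤ (1/(m:ℝ)) * ((∑ r, ‖a r‖^4) * (3 * (‖v‖^2 * (‖x‖^2 + 2*⟪x,v⟫*t + ‖v‖^2*t^2)))) :=
          mul_le_mul_of_nonneg_left (h1.trans_eq h2) (by positivity)
      _ = ((3/(m:ℝ)) * ∑ r, ‖a r‖^4) * (‖v‖^2 * (‖x‖^2 + 2*⟪x,v⟫*t + ‖v‖^2*t^2)) := by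
          ring
      _ ≤ L * (‖v‖^2 * (‖x‖^2 + 2*⟪x,v⟫*t + ‖v‖^2*t^2)) := by
          apply mul_le_mul_of_nonneg_right hL (by positivity)
  have hsum2 : (∑ r, ⟪a r, v⟫^2 * (3*(⟪a r, x⟫ + ⟪a r, v⟫*t)^2 - y r)) * 4
      = (∑ r, (2*(⟪a r, x⟫^2 - y r)*⟪a r, v⟫^2 + 4*⟪a r, x⟫^2*⟪a r, v⟫^2)) * 2
        + (∑ r, 4*⟪a r, x⟫*⟪a r, v⟫^3) * (6*t) + (∑ r, ⟪a r, v⟫^4) * (12*t^2) := by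
    rw [Finset.sum_mul, Finset.sum_mul, Finset.sum_mul, Finset.sum_mul,
      ← Finset.sum_add_distrib, ← Finset.sum_add_distrib]
    refine Finset.sum_congr rfl fun r _ => ?_
    ring
  have expand : 2*(L * (⟪x,v⟫^2 + ‖x‖^2*‖v‖^2/2 + ‖v‖^2/2)
            - (1 / (4 * (m : ℝ))) * ∑ r, (2*(⟪a r, x⟫^2 - y r)*⟪a r, v⟫^2
                + 4*⟪a r, x⟫^2*⟪a r, v⟫^2))
        + 6*(L * (⟪x,v⟫*‖v‖^2)
            - (1 / (4 * (m : ℝ))) * ∑ r, 4*⟪a r, x⟫*⟪a r, v⟫^3)*t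
        + 12*(L * ((‖v‖^2)^2/4) - (1 / (4 * (m : ℝ))) * ∑ r, ⟪a r, v⟫^4)*t^2
      = L*(2*(⟪x,v⟫ + ‖v‖^2*t)^2 + ‖v‖^2*(‖x‖^2 + 2*⟪x,v⟫*t + ‖v‖^2*t^2) + ‖v‖^2)
        - (1/(m:ℝ)) * ∑ r, ⟪a r, v⟫^2 * (3*(⟪a r, x⟫ + ⟪a r, v⟫*t)^2 - y r) := by
    have h4m : (1:ℝ)/(m:ℝ) = 4*(1/(4*(m:ℝ))) := by field_simp
    rw [h4m]
    linear_combination (1/(4*(m:ℝ))) * hsum2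
  rw [expand]
  nlinarith [hsumle, mul_nonneg hL0 (sq_nonneg (⟪x,v⟫ + ‖v‖^2*t)),
    mul_nonneg hL0 (sq_nonneg ‖v‖)]

lemma bregman_eq {n : ℕ} {φ : EuclideanSpace ℝ (Fin n) → ℝ} {u : EuclideanSpace ℝ (Fin n)}
    {D : EuclideanSpace ℝ (Fin n) →L[ℝ] ℝ} (h : HasFDerivAt φ D u)
    (x : EuclideanSpace ℝ (Fin n)) :
    bregman φ x u = φ x - φ u - D (x - u) := by
  have hg : ⟪gradient φ u, x - u⟫ = D (x - u) := by
    rw [gradient, h.fderiv, InnerProductSpace.toDual_symm_apply]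
  rw [bregman, hg]

lemma first_order {n : ℕ} {G : EuclideanSpace ℝ (Fin n) → ℝ} (hG : ConvexOn ℝ Set.univ G)
    {u : EuclideanSpace ℝ (Fin n)} {D : EuclideanSpace ℝ (Fin n) →L[ℝ] ℝ}
    (hD : HasFDerivAt G D u) (x : EuclideanSpace ℝ (Fin n)) :
    G u + D (x - u) ≤ G x := by
  have hline : HasDerivAt (fun t : ℝ => u + t • (x - u)) (x - u) 0 := by
    simpa using ((hasDerivAt_id (0:ℝ)).smul_const (x - u)).const_add u
  have h0 : u + (0:ℝ) • (x - u) = u := by simp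
  have hφd : HasDerivAt (fun t : ℝ => G (u + t • (x - u))) (D (x - u)) 0 := by
    have h := HasFDerivAt.comp_hasDerivAt 0 (h0 ▸ hD) hline
    exact h
  have hφc : ConvexOn ℝ Set.univ (fun t : ℝ => G (u + t • (x - u))) := by
    have h := hG.comp_affineMap (AffineMap.lineMap u x)
    have he : (G ∘ (AffineMap.lineMap u x)) = fun t : ℝ => G (u + t • (x - u)) := by
      funext t
      simp [AffineMap.lineMap_apply, Function.comp, add_comm]
    have hs : ((AffineMap.lineMap u x : ℝ →ᵃ[ℝ] EuclideanSpace ℝ (Fin n)) ⁻¹' Set.univ)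
        = Set.univ := Set.preimage_univ
    rw [he, hs] at h
    exact h
  have hslope := hφc.le_slope_of_hasDerivAt (Set.mem_univ (0:ℝ)) (Set.mem_univ (1:ℝ))
    one_pos hφd
  have h1 : u + (1:ℝ) • (x - u) = x := by simp
  rw [slope_def_field] at hslope
  rw [h0, h1] at hslope
  simp only [sub_zero, div_one, map_sub] at hslope
  simp only [map_sub]
  linarith

/-- Relative smoothness of the phase retrieval objective with respect to the
entropy `ψ(x) = ‖x‖⁴/4 + ‖x‖²/2`. -/
theorem phase_retrieval_relative_smoothness {n m : ℕ} (hm : 0 < m)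
    (a : Fin m → EuclideanSpace ℝ (Fin n)) (y : Fin m → ℝ)
    (hy : ∀ r, 0 ≤ y r) (L : ℝ)
    (hL : (3 / (m : ℝ)) * ∑ r, ‖a r‖ ^ 4 ≤ L) :
    (ConvexOn ℝ Set.univ
      (fun x : EuclideanSpace ℝ (Fin n) =>
        L * (‖x‖ ^ 4 / 4 + ‖x‖ ^ 2 / 2)
          - (1 / (4 * (m : ℝ))) * ∑ r, (⟪a r, x⟫ ^ 2 - y r) ^ 2)) ∧
    (∀ x u : EuclideanSpace ℝ (Fin n),
      bregman (fun z => (1 / (4 * (m : ℝ))) * ∑ r, (⟪a r, z⟫ ^ 2 - y r) ^ 2) x u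
        ≤ L * bregman (fun z => ‖z‖ ^ 4 / 4 + ‖z‖ ^ 2 / 2) x u) := by
  have hconv : ConvexOn ℝ Set.univ
      (fun x : EuclideanSpace ℝ (Fin n) =>
        L * (‖x‖ ^ 4 / 4 + ‖x‖ ^ 2 / 2)
          - (1 / (4 * (m : ℝ))) * ∑ r, (⟪a r, x⟫ ^ 2 - y r) ^ 2) := by
    refine ⟨convex_univ, ?_⟩
    intro p _ q _ μ ν hμ hν hμν
    have hl := line_convex hm a y hy L hL p (q - p)
    have h := hl.2 (Set.mem_univ (0:ℝ)) (Set.mem_univ (1:ℝ)) hμ hν hμν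
    have e3 : p + ν • (q - p) = μ • p + ν • q := by
      have hμ' : μ = 1 - ν := by linarith
      rw [hμ', smul_sub, sub_smul, one_smul]
      abel
    simp only [smul_eq_mul, mul_zero, mul_one, zero_add] at h
    rw [e3] at h
    simp only [zero_smul, add_zero, one_smul, add_sub_cancel] at h
    simpa only [smul_eq_mul] using h
  refine ⟨hconv, ?_⟩
  intro x u
  have hψeq : (fun z : EuclideanSpace ℝ (Fin n) => ‖z‖ ^ 4 / 4 + ‖z‖ ^ 2 / 2)
      = fun z : EuclideanSpace ℝ (Fin n) => ⟪z,z⟫^2/4 + ⟪z,z⟫/2 := by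
    funext z; rw [real_inner_self_eq_norm_sq]; ring
  rw [hψeq]
  have hfd : DifferentiableAt ℝ
      (fun z : EuclideanSpace ℝ (Fin n) =>
        1 / (4 * (m : ℝ)) * ∑ r, (⟪a r, z⟫ ^ 2 - y r) ^ 2) u := by
    apply DifferentiableAt.const_mul
    apply DifferentiableAt.fun_sum
    intro r _
    have hb : DifferentiableAt ℝ (fun z : EuclideanSpace ℝ (Fin n) => ⟪a r, z⟫) u :=
      (differentiableAt_const (a r)).inner ℝ differentiableAt_fun_id
    fun_prop
  have hψd : DifferentiableAt ℝ
      (fun z : EuclideanSpace ℝ (Fin n) => ⟪z,z⟫^2/4 + ⟪z,z⟫/2) u := by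
    have hb : DifferentiableAt ℝ (fun z : EuclideanSpace ℝ (Fin n) => ⟪z,z⟫) u :=
      differentiableAt_fun_id.inner ℝ differentiableAt_fun_id
    fun_prop
  have hfD := hfd.hasFDerivAt
  have hψD := hψd.hasFDerivAt
  have hGD := (hψD.const_mul L).sub hfD
  have hGconv : ConvexOn ℝ Set.univ
      (fun z : EuclideanSpace ℝ (Fin n) =>
        L * (⟪z,z⟫^2/4 + ⟪z,z⟫/2)
          - 1 / (4 * (m : ℝ)) * ∑ r, (⟪a r, z⟫ ^ 2 - y r) ^ 2) := by
    have hfe : (fun x : EuclideanSpace ℝ (Fin n) =>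
        L * (‖x‖ ^ 4 / 4 + ‖x‖ ^ 2 / 2)
          - (1 / (4 * (m : ℝ))) * ∑ r, (⟪a r, x⟫ ^ 2 - y r) ^ 2)
        = fun z : EuclideanSpace ℝ (Fin n) =>
        L * (⟪z,z⟫^2/4 + ⟪z,z⟫/2)
          - 1 / (4 * (m : ℝ)) * ∑ r, (⟪a r, z⟫ ^ 2 - y r) ^ 2 := by
      funext z; rw [real_inner_self_eq_norm_sq]; ring
    exact hfe ▸ hconv
  have hfo := first_order hGconv hGD x
  have hb1 := bregman_eq hfD x
  have hb2 := bregman_eq hψD x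
  rw [hb1, hb2]
  simp only [ContinuousLinearMap.sub_apply, ContinuousLinearMap.smul_apply,
    smul_eq_mul] at hfo
  linarith
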